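/- Let n ≥ 1, d ≥ 2 and let A = [a_ij] ∈ ℝ^{n×n} have nonnegative entries and be strictly diagonally dominant. Let x be a consensus configuration with common value x̄ (a unit vector in ℝ^d), so x_i = x̄ for all i. Then the projected Jacobian at x satisfies J(x) = (D(AX)A) ⊗ (I_d − x̄ x̄^T), where D(AX) is the diagonal matrix with i-th entry (Σ_{j=1}^n a_ij)^{-1}; in particular D(AX)A is a row-stochastic matrix. -/

import Mathlib

open scoped BigOperators

noncomputable section

/-- The conical combination `Σ_j a_ij x_j`. -/
def consSum {n d : ℕ} (A : Matrix (Fin n) (Fin n) ℝ)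
    (x : Fin n → EuclideanSpace ℝ (Fin d)) (i : Fin n) : EuclideanSpace ℝ (Fin d) :=
  ∑ j, A i j • x j

/-- The consensus map `f_A`: projection of the conical combination onto the unit sphere. -/
def consMap {n d : ℕ} (A : Matrix (Fin n) (Fin n) ℝ)
    (x : Fin n → EuclideanSpace ℝ (Fin d)) (i : Fin n) : EuclideanSpace ℝ (Fin d) :=
  ‖consSum A x i‖⁻¹ • consSum A x i

/-- The block-diagonal projection matrix `P_x` with diagonal blocks `I_d − x_i x_iᵀ`. -/
def projBlock {n d : ℕ} (x : Fin n → EuclideanSpace ℝ (Fin d)) :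
    Matrix (Fin n × Fin d) (Fin n × Fin d) ℝ :=
  Matrix.of fun p q =>
    if p.1 = q.1 then (if p.2 = q.2 then (1 : ℝ) else 0) - x p.1 p.2 * x p.1 q.2 else 0

/-- The diagonal normalization matrix `D(AX)`, with `i`-th entry `‖Σ_j a_ij x_j‖⁻¹`. -/
def Dmat {n d : ℕ} (A : Matrix (Fin n) (Fin n) ℝ)
    (x : Fin n → EuclideanSpace ℝ (Fin d)) : Matrix (Fin n) (Fin n) ℝ :=
  Matrix.diagonal fun i => ‖consSum A x i‖⁻¹

/-- The projected Jacobian `J(x) = P_{f(x)} (D(AX)A ⊗ I_d) P_x`. -/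
def Jmat {n d : ℕ} (A : Matrix (Fin n) (Fin n) ℝ)
    (x : Fin n → EuclideanSpace ℝ (Fin d)) :
    Matrix (Fin n × Fin d) (Fin n × Fin d) ℝ :=
  projBlock (consMap A x) *
    Matrix.kroneckerMap (· * ·) (Dmat A x * A) (1 : Matrix (Fin d) (Fin d) ℝ) *
    projBlock x

/-- at a consensus configuration `x ≡ x̄`, the projected Jacobian equals
`(D(AX)A) ⊗ (I_d − x̄ x̄ᵀ)` where `D(AX)` has `i`-th diagonal entry `(Σ_j a_ij)⁻¹`; in
particular `D(AX)A` is row-stochastic. -/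
theorem stmt_7 (n d : ℕ) (hn : 1 ≤ n) (hd : 2 ≤ d)
    (A : Matrix (Fin n) (Fin n) ℝ)
    (hApos : ∀ i j, 0 ≤ A i j)
    (hdd : ∀ i, ∑ j ∈ Finset.univ.erase i, A i j < A i i)
    (xbar : EuclideanSpace ℝ (Fin d)) (hxbar : ‖xbar‖ = 1) :
    Jmat A (fun _ : Fin n => xbar) =
      Matrix.kroneckerMap (· * ·)
        (Matrix.diagonal (fun i => (∑ j, A i j)⁻¹) * A)
        ((1 : Matrix (Fin d) (Fin d) ℝ) - Matrix.of fun a b => xbar a * xbar b) ∧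
    (∀ i, ∑ j, (Matrix.diagonal (fun i => (∑ j, A i j)⁻¹) * A) i j = 1) ∧
    (∀ i j, 0 ≤ (Matrix.diagonal (fun i => (∑ j, A i j)⁻¹) * A) i j) := by
  -- row sums are positive
  have hc : ∀ i, 0 < ∑ j, A i j := by
    intro i
    have h1 : (0:ℝ) ≤ ∑ j ∈ Finset.univ.erase i, A i j :=
      Finset.sum_nonneg fun j _ => hApos i j
    have h2 : 0 < A i i := lt_of_le_of_lt h1 (hdd i)
    have : ∑ j, A i j = A i i + ∑ j ∈ Finset.univ.erase i, A i j := by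
      rw [← Finset.add_sum_erase _ _ (Finset.mem_univ i)]
    rw [this]; positivity
  have hsum : ∀ i : Fin n, consSum A (fun _ => xbar) i = (∑ j, A i j) • xbar := by
    intro i; simp [consSum, ← Finset.sum_smul]
  have hnorm : ∀ i : Fin n, ‖consSum A (fun _ => xbar) i‖ = ∑ j, A i j := by
    intro i
    rw [hsum i, norm_smul, hxbar, mul_one, Real.norm_eq_abs, abs_of_pos (hc i)]
  have hmap : consMap A (fun _ : Fin n => xbar) = fun _ => xbar := by
    funext i
    rw [consMap, hnorm i, hsum i, smul_smul, inv_mul_cancel₀ (hc i).ne', one_smul]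
  have hD : Dmat A (fun _ : Fin n => xbar) =
      Matrix.diagonal (fun i => (∑ j, A i j)⁻¹) := by
    unfold Dmat; simp only [hnorm]
  -- ⟪xbar, xbar⟫ = 1
  have hdot : ∑ c : Fin d, xbar c * xbar c = 1 := by
    have := real_inner_self_eq_norm_sq xbar
    rw [hxbar] at this
    simp only [PiLp.inner_apply, RCLike.inner_apply, conj_trivial, one_pow] at this
    simpa using this
  set P : Matrix (Fin d) (Fin d) ℝ :=
    (1 : Matrix (Fin d) (Fin d) ℝ) - Matrix.of fun a b => xbar a * xbar b with hPdef
  have hQ : (Matrix.of fun a b => xbar a * xbar b : Matrix (Fin d) (Fin d) ℝ) *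
      (Matrix.of fun a b => xbar a * xbar b) = Matrix.of fun a b => xbar a * xbar b := by
    ext a b
    simp only [Matrix.mul_apply, Matrix.of_apply]
    calc ∑ c, (xbar a * xbar c) * (xbar c * xbar b)
        = xbar a * xbar b * ∑ c, xbar c * xbar c := by rw [Finset.mul_sum]; congr 1; funext c; ring
      _ = xbar a * xbar b := by rw [hdot, mul_one]
  have hPP : P * P = P := by
    rw [hPdef]
    simp [Matrix.sub_mul, Matrix.mul_sub, hQ]
  have hproj : projBlock (fun _ : Fin n => xbar) =
      Matrix.kroneckerMap (· * ·) (1 : Matrix (Fin n) (Fin n) ℝ) P := by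
    ext ⟨i, a⟩ ⟨j, b⟩
    simp only [projBlock, Matrix.of_apply, Matrix.kroneckerMap_apply, hPdef,
      Matrix.sub_apply, Matrix.one_apply]
    by_cases h : i = j <;> simp [h]
  set S : Matrix (Fin n) (Fin n) ℝ := Matrix.diagonal (fun i => (∑ j, A i j)⁻¹) * A with hS
  refine ⟨?_, ?_, ?_⟩
  · rw [Jmat, hmap, hD, hproj, ← hS]
    calc (Matrix.kroneckerMap (· * ·) 1 P) * Matrix.kroneckerMap (· * ·) S 1 *
          Matrix.kroneckerMap (· * ·) 1 P
        = Matrix.kroneckerMap (· * ·) (1 * S * 1) (P * 1 * P) := by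
          rw [Matrix.mul_kronecker_mul, Matrix.mul_kronecker_mul]
      _ = Matrix.kroneckerMap (· * ·) S P := by rw [Matrix.one_mul, Matrix.mul_one,
          Matrix.mul_one, hPP]
  · intro i
    simp only [hS, Matrix.diagonal_mul]
    rw [← Finset.mul_sum, inv_mul_cancel₀ (hc i).ne']
  · intro i j
    simp only [hS, Matrix.diagonal_mul]
    exact mul_nonneg (inv_nonneg.2 (hc i).le) (hApos i j)

end
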